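/- Let μ ≠ 0, ρ ∈ ℝ, and let κ : I → ℝ be a twice differentiable nowhere-vanishing function on an interval I satisfying the Euler–Lagrange equation EL(μ,ρ). Then there exists a constant d ∈ ℝ such that for all s ∈ I, κ'(s)² = (κ(s)⁴/μ⁴)·(d·κ(s)²·e^{−2μ/κ(s)} − μ²κ(s)² − ρ(κ(s) − μ)²). -/

import Mathlib

/-- If a twice differentiable nowhere-vanishing function `κ` on an interval `I` satisfies the
Euler–Lagrange equation `EL(μ,ρ)` of the curvature energy `Θ_μ` in the 2-space form of
curvature `ρ`, then there is a constant `d` such that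
`κ'² = (κ⁴/μ⁴)(dκ²e^{−2μ/κ} − μ²κ² − ρ(κ−μ)²)` on `I`. -/
theorem first_integral_of_EL (μ ρ : ℝ) (hμ : μ ≠ 0) (I : Set ℝ) (hIopen : IsOpen I)
    (hIconn : I.OrdConnected)
    (κ : ℝ → ℝ) (hκ0 : ∀ s ∈ I, κ s ≠ 0)
    (hκ1 : ∀ s ∈ I, DifferentiableAt ℝ κ s)
    (hκ2 : ∀ s ∈ I, DifferentiableAt ℝ (deriv κ) s)
    (hEL : ∀ s ∈ I,
      deriv (deriv (fun t => (1 - μ / κ t) * Real.exp (μ / κ t))) s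
        + (ρ * (1 - μ / κ s) - μ * κ s) * Real.exp (μ / κ s) = 0) :
    ∃ d : ℝ, ∀ s ∈ I,
      (deriv κ s) ^ 2 =
        (κ s) ^ 4 / μ ^ 4 *
          (d * (κ s) ^ 2 * Real.exp (-2 * μ / κ s) - μ ^ 2 * (κ s) ^ 2
            - ρ * (κ s - μ) ^ 2) := by
  rcases Set.eq_empty_or_nonempty I with hI | ⟨s₀, hs₀⟩
  · exact ⟨0, by simp [hI]⟩
  have hu : ∀ s ∈ I, HasDerivAt (fun t => μ / κ t)
      ((0 * κ s - μ * deriv κ s) / κ s ^ 2) s := fun s hs =>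
    (hasDerivAt_const s μ).div (hκ1 s hs).hasDerivAt (hκ0 s hs)
  set g : ℝ → ℝ := fun s => μ ^ 2 * deriv κ s * Real.exp (μ / κ s) / κ s ^ 3 with hgdef
  have hF : ∀ s ∈ I, HasDerivAt (fun t => (1 - μ / κ t) * Real.exp (μ / κ t)) (g s) s := by
    intro s hs
    have h := ((hasDerivAt_const s (1:ℝ)).sub (hu s hs)).mul (hu s hs).exp
    refine h.congr_deriv (Eq.symm ?_)
    have hk := hκ0 s hs
    simp only [hgdef, Pi.sub_apply]
    field_simp
    ring
  have hg : ∀ s ∈ I, HasDerivAt g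
      (((μ ^ 2 * deriv (deriv κ) s * Real.exp (μ / κ s)
          + μ ^ 2 * deriv κ s * (Real.exp (μ / κ s) * ((0 * κ s - μ * deriv κ s) / κ s ^ 2)))
            * κ s ^ 3
          - μ ^ 2 * deriv κ s * Real.exp (μ / κ s) * (3 * κ s ^ 2 * deriv κ s))
        / (κ s ^ 3) ^ 2) s := by
    intro s hs
    exact ((((hκ2 s hs).hasDerivAt.const_mul (μ ^ 2)).mul (hu s hs).exp).div
      (((hκ1 s hs).hasDerivAt.pow 3)) (pow_ne_zero 3 (hκ0 s hs)))
  have KEY : ∀ s ∈ I,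
      μ ^ 2 * (deriv (deriv κ) s * κ s ^ 3 - 3 * (deriv κ s) ^ 2 * κ s ^ 2
        - μ * (deriv κ s) ^ 2 * κ s)
      = μ * κ s ^ 7 - ρ * κ s ^ 6 + ρ * μ * κ s ^ 5 := by
    intro s hs
    have hEq : deriv (deriv (fun t => (1 - μ / κ t) * Real.exp (μ / κ t))) s = deriv g s := by
      apply Filter.EventuallyEq.deriv_eq
      filter_upwards [hIopen.mem_nhds hs] with t ht using (hF t ht).deriv
    have h2 := hEL s hs
    rw [hEq, (hg s hs).deriv] at h2
    have hk := hκ0 s hs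
    have hE := Real.exp_ne_zero (μ / κ s)
    field_simp at h2
    have h3 : (μ ^ 2 * deriv (deriv κ) s * κ s ^ 6 - μ ^ 3 * (deriv κ s) ^ 2 * κ s ^ 4
        - 3 * μ ^ 2 * (deriv κ s) ^ 2 * κ s ^ 5 + ρ * κ s ^ 9 - ρ * μ * κ s ^ 8
        - μ * κ s ^ 10) * Real.exp (μ / κ s) = 0 := by linear_combination κ s ^ 4 * h2
    have h4 := (mul_eq_zero.1 h3).resolve_right hE
    apply mul_left_cancel₀ (pow_ne_zero 3 hk)
    linear_combination h4
  -- the conserved quantity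
  set H : ℝ → ℝ := fun s =>
    (μ ^ 4 * (deriv κ s) ^ 2 / κ s ^ 6 + ρ * (μ / κ s - 1) ^ 2 + μ ^ 2)
      * Real.exp (2 * μ / κ s) with hHdef
  have hH : ∀ s ∈ I, HasDerivAt H 0 s := by
    intro s hs
    have hk := hκ0 s hs
    have hE2 : HasDerivAt (fun t => Real.exp (2 * μ / κ t))
        (Real.exp (2 * μ / κ s) * ((0 * κ s - 2 * μ * deriv κ s) / κ s ^ 2)) s :=
      ((hasDerivAt_const s (2 * μ)).div (hκ1 s hs).hasDerivAt hk).exp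
    have hA1 : HasDerivAt (fun t => μ ^ 4 * (deriv κ t) ^ 2 / κ t ^ 6)
        ((μ ^ 4 * (2 * deriv κ s ^ 1 * deriv (deriv κ) s) * κ s ^ 6
          - μ ^ 4 * (deriv κ s) ^ 2 * (6 * κ s ^ 5 * deriv κ s)) / (κ s ^ 6) ^ 2) s :=
      (((hκ2 s hs).hasDerivAt.pow 2).const_mul (μ ^ 4)).div
        ((hκ1 s hs).hasDerivAt.pow 6) (pow_ne_zero 6 hk)
    have hA2 : HasDerivAt (fun t => ρ * (μ / κ t - 1) ^ 2)
        (ρ * (2 * (μ / κ s - 1) ^ 1 * ((0 * κ s - μ * deriv κ s) / κ s ^ 2))) s :=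
      (((hu s hs).sub_const 1).pow 2).const_mul ρ
    have h := ((hA1.add hA2).add_const (μ ^ 2)).mul hE2
    refine h.congr_deriv (Eq.symm ?_)
    have hE := Real.exp_ne_zero (2 * μ / κ s)
    generalize Real.exp (2 * μ / κ s) = E at *
    simp only [Pi.add_apply]
    field_simp
    apply mul_left_cancel₀ hk
    linear_combination (-2 * deriv κ s * E
      * (μ ^ 2)) * KEY s hs
  -- H is constant on I
  have hconst : ∀ s ∈ I, H s = H s₀ := by
    intro s hs
    refine (hIconn.convex).is_const_of_fderivWithin_eq_zero
      (fun x hx => ((hH x hx).differentiableAt).differentiableWithinAt) ?_ hs hs₀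
    intro x hx
    have h1 : fderivWithin ℝ H I x = fderiv ℝ H x :=
      fderivWithin_of_isOpen hIopen hx
    rw [h1, ((hH x hx).hasFDerivAt).fderiv]
    ext
    simp
  refine ⟨H s₀, fun s hs => ?_⟩
  obtain ⟨d, hd, hds⟩ : ∃ d, H s₀ = d ∧ (μ ^ 4 * (deriv κ s) ^ 2 / κ s ^ 6
      + ρ * (μ / κ s - 1) ^ 2 + μ ^ 2) * Real.exp (2 * μ / κ s) = d :=
    ⟨H s₀, rfl, hconst s hs⟩
  rw [hd]
  have hk := hκ0 s hs
  have hHs := hds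
  have hexp : Real.exp (-2 * μ / κ s) = (Real.exp (2 * μ / κ s))⁻¹ := by
    rw [← Real.exp_neg]
    ring_nf
  rw [hexp]
  have hE := Real.exp_ne_zero (2 * μ / κ s)
  field_simp at hHs ⊢
  simp only [show μ * 2 / κ s = 2 * μ / κ s by ring] at hHs ⊢
  have hHs2 : (μ ^ 4 * deriv κ s ^ 2 + ρ * (μ - κ s) ^ 2 * κ s ^ 4 + μ ^ 2 * κ s ^ 6)
      * Real.exp (2 * μ / κ s) = d * κ s ^ 6 := by
    apply mul_left_cancel₀ (pow_ne_zero 2 hk)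
    linear_combination κ s ^ 2 * hHs
  linear_combination hHs2
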